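/- Let f : ℝ → (0,∞) be twice continuously differentiable and nonincreasing with f(0) = 1, let M > 0, and suppose the map Γ ↦ (M − Γ) f′(Γ)/f(Γ) is nondecreasing on [0, M). Then for every S ∈ (0, M] and every Γ ∈ [0, S): 0 ≥ (S − Γ) f′(Γ)/f(Γ) ≥ M f′(0). Consequently, if θ_min > 0 and α ∈ ( −M f′(0)/((1 − M f′(0)) θ_min), 1/θ_min ), then 1 + ((1 − α θ_min)/(α θ_min)) (S − Γ) f′(Γ)/f(Γ) > 0. -/

import Mathlib

open Set Filter Topology

noncomputable section

lemma antitone_deriv_nonpos {f : ℝ → ℝ} (hf : Differentiable ℝ f)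
    (ha : Antitone f) (x : ℝ) : deriv f x ≤ 0 := by
  have h := (hf x).hasDerivAt
  rw [hasDerivAt_iff_tendsto_slope] at h
  have h' : Tendsto (slope f x) (𝓝[>] x) (𝓝 (deriv f x)) :=
    h.mono_left (nhdsWithin_mono x fun y hy => hy.ne')
  refine le_of_tendsto h' ?_
  filter_upwards [self_mem_nhdsWithin] with y hy
  have hle : f y ≤ f x := ha (le_of_lt hy)
  rw [slope_def_field]
  exact div_nonpos_of_nonpos_of_nonneg (by linarith) (by simp [le_of_lt (mem_Ioi.mp hy)])

/-- **Bounds on the marginal impact term and positivity of `Λ` (proof of Lemma 3.7).**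
If `γ ↦ (M - γ) f'(γ)/f(γ)` is nondecreasing on `[0, M)`, then for every
`S ∈ (0, M]` and `γ ∈ [0, S)` one has `0 ≥ (S - γ) f'(γ)/f(γ) ≥ M f'(0)`.
Consequently, if `θmin > 0` and `α ∈ (-(M f'(0))/((1 - M f'(0)) θmin), 1/θmin)`,
then `1 + ((1 - α θmin)/(α θmin)) (S - γ) f'(γ)/f(γ) > 0`. -/
theorem marginal_impact_bounds
    (f : ℝ → ℝ) (M : ℝ) (hM : 0 < M)
    (hfC : ContDiff ℝ 2 f) (hfanti : Antitone f) (hfpos : ∀ γ, 0 < f γ)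
    (hf0 : f 0 = 1)
    (hmono : MonotoneOn (fun γ => (M - γ) * deriv f γ / f γ) (Ico 0 M)) :
    ∀ S ∈ Ioc 0 M, ∀ γ ∈ Ico 0 S,
      ((S - γ) * deriv f γ / f γ ≤ 0 ∧
        M * deriv f 0 ≤ (S - γ) * deriv f γ / f γ) ∧
      ∀ θmin α : ℝ, 0 < θmin →
        α ∈ Ioo (-(M * deriv f 0) / ((1 - M * deriv f 0) * θmin)) (1 / θmin) →
          0 < 1 + (1 - α * θmin) / (α * θmin) * ((S - γ) * deriv f γ / f γ) := by
  intro S hS γ hγ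
  obtain ⟨hS0, hSM⟩ := hS
  obtain ⟨hγ0, hγS⟩ := hγ
  have hdiff : Differentiable ℝ f := hfC.differentiable (by norm_num)
  have hfd : ∀ x, deriv f x ≤ 0 := antitone_deriv_nonpos hdiff hfanti
  have hfγ := hfpos γ
  have hγM : γ < M := lt_of_lt_of_le hγS hSM
  set x := (S - γ) * deriv f γ / f γ with hxdef
  have hx0 : x ≤ 0 :=
    div_nonpos_of_nonpos_of_nonneg
      (mul_nonpos_of_nonneg_of_nonpos (by linarith) (hfd γ)) hfγ.le
  have hL1 : M * deriv f 0 ≤ (M - γ) * deriv f γ / f γ := by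
    have h := hmono ⟨le_refl 0, hM⟩ ⟨hγ0, hγM⟩ hγ0
    simpa [hf0] using h
  have h2 : (M - γ) * deriv f γ / f γ ≤ x := by
    exact (div_le_div_iff_of_pos_right hfγ).mpr (mul_le_mul_of_nonpos_right (by linarith) (hfd γ))
  have hL : M * deriv f 0 ≤ x := hL1.trans h2
  refine ⟨⟨hx0, hL⟩, ?_⟩
  intro θ α hθ hα
  obtain ⟨hα1, hα2⟩ := hα
  set L := M * deriv f 0 with hLdef
  have hL0 : L ≤ 0 := mul_nonpos_of_nonneg_of_nonpos hM.le (hfd 0)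
  have hden : 0 < (1 - L) * θ := mul_pos (by linarith) hθ
  have hαpos : 0 < α :=
    lt_of_le_of_lt (div_nonneg (by linarith) hden.le) hα1
  have ht : 0 < α * θ := mul_pos hαpos hθ
  have ht1 : α * θ < 1 := by
    have := (lt_div_iff₀ hθ).mp hα2
    linarith
  have hkey : 0 < α * θ + (1 - α * θ) * L := by
    have h3 : -L < α * ((1 - L) * θ) := (div_lt_iff₀ hden).mp hα1
    nlinarith
  have hc : 0 ≤ (1 - α * θ) / (α * θ) := div_nonneg (by linarith) ht.le
  have h1 : 0 < 1 + (1 - α * θ) / (α * θ) * L := by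
    have := div_pos hkey ht
    have heq : (α * θ + (1 - α * θ) * L) / (α * θ)
        = 1 + (1 - α * θ) / (α * θ) * L := by field_simp
    linarith [heq ▸ this]
  have h4 : (1 - α * θ) / (α * θ) * L ≤ (1 - α * θ) / (α * θ) * x :=
    mul_le_mul_of_nonneg_left hL hc
  linarith
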